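/- arXiv:1610.09035 — 2 statements merged into one kernel-verified Lean document; each statement's English description precedes it below -/
import Mathlib

section
/- Total count of classes via fibers: with the covering setup and Π₂/Γ₂ finite, if for each class [β̄] ∈ R[φ̄, ψ̄] one chooses a lift β ∈ Π₂, then the cardinality of R[φ, ψ] equals the sum over [β̄] ∈ R[φ̄, ψ̄] of the cardinality of the image of î₂^β : R[τ_β φ', ψ'] → R[τ_β φ, ψ]. -/
/-- The doubly-twisted conjugacy setoid on G₂. -/
def dtc {G₁ G₂ : Type*} [Group G₁] [Group G₂] (φ ψ : G₁ →* G₂) : Setoid G₂ where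
  r α β := ∃ γ : G₁, α = (ψ γ)⁻¹ * β * φ γ
  iseqv := by
    constructor
    · intro α; exact ⟨1, by simp⟩
    · rintro α β ⟨γ, rfl⟩
      exact ⟨γ⁻¹, by simp [mul_assoc]⟩
    · rintro α β c ⟨γ, rfl⟩ ⟨δ, rfl⟩
      exact ⟨δ * γ, by simp [mul_assoc]⟩

/-- The Reidemeister set `R[φ,ψ]`. -/
abbrev ReidemeisterSet {G₁ G₂ : Type*} [Group G₁] [Group G₂] (φ ψ : G₁ →* G₂) :=
  Quotient (dtc φ ψ)

/-- Conjugation `τ_β` composed with `φ`. -/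
def conjComp {G₁ G₂ : Type*} [Group G₁] [Group G₂] (β : G₂) (φ : G₁ →* G₂) : G₁ →* G₂ :=
  (MulAut.conj β).toMonoidHom.comp φ

/-- Restriction of `φ : G₁ →* G₂` to a homomorphism `Γ₁ →* Γ₂`. -/
def restrictHom {G₁ G₂ : Type*} [Group G₁] [Group G₂] {Γ₁ : Subgroup G₁} {Γ₂ : Subgroup G₂}
    (φ : G₁ →* G₂) (h : ∀ x ∈ Γ₁, φ x ∈ Γ₂) : Γ₁ →* Γ₂ where
  toFun x := ⟨φ x, h x x.2⟩
  map_one' := Subtype.ext (by simp)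
  map_mul' a b := Subtype.ext (by simp)


section Aux

variable {G₁ G₂ : Type*} [Group G₁] [Group G₂]

/-- The shift map `ρ_β : R[τ_β φ, ψ] → R[φ, ψ]`, `[x] ↦ [xβ]`. -/
def rhoShift (φ ψ : G₁ →* G₂) (β : G₂) :
    ReidemeisterSet (conjComp β φ) ψ → ReidemeisterSet φ ψ :=
  Quotient.map (fun x => x * β) (by
    rintro a b ⟨γ, rfl⟩
    refine ⟨γ, ?_⟩
    simp only [conjComp, MonoidHom.comp_apply, MulEquiv.coe_toMonoidHom, MulAut.conj_apply]
    group)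

lemma rhoShift_mk (φ ψ : G₁ →* G₂) (β x : G₂) :
    rhoShift φ ψ β (Quotient.mk (dtc (conjComp β φ) ψ) x)
      = Quotient.mk (dtc φ ψ) (x * β) := rfl

lemma rhoShift_injective (φ ψ : G₁ →* G₂) (β : G₂) :
    Function.Injective (rhoShift φ ψ β) := by
  intro a b
  induction a using Quotient.ind with | _ a =>
  induction b using Quotient.ind with | _ b =>
  intro h
  rw [rhoShift_mk, rhoShift_mk, Quotient.eq] at h
  obtain ⟨γ, hγ⟩ := h
  refine Quotient.sound ⟨γ, ?_⟩
  simp only [conjComp, MonoidHom.comp_apply, MulEquiv.coe_toMonoidHom, MulAut.conj_apply]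
  refine mul_right_cancel (b := β) ?_
  rw [hγ]; group

end Aux

/-- Total count of classes via fibers: choosing for each class `[β̄] ∈ R[φ̄,ψ̄]` a lift
`β ∈ G₂`, the cardinality of `R[φ,ψ]` equals the sum over `[β̄]` of the cardinality of
the image of `î₂^β : R[τ_β φ', ψ'] → R[τ_β φ, ψ]` (which is the set of classes of
elements of `Γ₂`). -/
theorem card_reidemeister_eq_sum_fibers {G₁ G₂ : Type*} [Group G₁] [Group G₂]
    (Γ₁ : Subgroup G₁) (Γ₂ : Subgroup G₂) [Γ₁.Normal] [Γ₂.Normal]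
    [Γ₁.FiniteIndex] [Γ₂.FiniteIndex]
    (φ ψ : G₁ →* G₂) (hφ : ∀ x ∈ Γ₁, φ x ∈ Γ₂) (hψ : ∀ x ∈ Γ₁, ψ x ∈ Γ₂)
    (σ : ReidemeisterSet (QuotientGroup.map Γ₁ Γ₂ φ (fun x hx => hφ x hx))
          (QuotientGroup.map Γ₁ Γ₂ ψ (fun x hx => hψ x hx)) → G₂)
    (hσ : ∀ c, Quotient.mk (dtc (QuotientGroup.map Γ₁ Γ₂ φ (fun x hx => hφ x hx))
            (QuotientGroup.map Γ₁ Γ₂ ψ (fun x hx => hψ x hx))) ((σ c : G₂ ⧸ Γ₂)) = c) :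
    Cardinal.mk (ReidemeisterSet φ ψ) =
      Cardinal.sum (fun c =>
        Cardinal.mk (Set.range (fun γ : Γ₂ =>
          Quotient.mk (dtc (conjComp (σ c) φ) ψ) ((γ : G₂))))) := by
  classical
  rw [← Cardinal.mk_sigma]
  refine Cardinal.mk_congr (Equiv.ofBijective (fun x => rhoShift φ ψ (σ x.1) x.2.1) ⟨?_, ?_⟩).symm
  all_goals
    have pwd : ∀ a b : G₂, (dtc φ ψ).r a b →
        (dtc (QuotientGroup.map Γ₁ Γ₂ φ fun x hx => hφ x hx)
          (QuotientGroup.map Γ₁ Γ₂ ψ fun x hx => hψ x hx)).r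
          (QuotientGroup.mk a) (QuotientGroup.mk b) := by
      rintro a b ⟨γ, rfl⟩
      exact ⟨QuotientGroup.mk γ, by simp [QuotientGroup.map_mk]; rfl⟩
  · -- injectivity
    have hpG : ∀ x : (Σ c, (Set.range fun γ : Γ₂ =>
        Quotient.mk (dtc (conjComp (σ c) φ) ψ) (γ : G₂))),
        Quotient.map QuotientGroup.mk pwd (rhoShift φ ψ (σ x.1) x.2.1) = x.1 := by
      rintro ⟨c, val, γ, rfl⟩
      show Quotient.mk _ (QuotientGroup.mk ((γ : G₂) * σ c) : G₂ ⧸ Γ₂) = c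
      have h2 : (QuotientGroup.mk ((γ : G₂) * σ c) : G₂ ⧸ Γ₂) = QuotientGroup.mk (σ c) := by
        rw [QuotientGroup.mk_mul, (QuotientGroup.eq_one_iff _).mpr γ.2, one_mul]
      rw [h2, hσ]
    rintro ⟨c, x⟩ ⟨c', x'⟩ h
    have hc : c = c' := by
      have h1 := hpG ⟨c, x⟩
      have h2 := hpG ⟨c', x'⟩
      simp only at h1 h2
      rw [← h1, ← h2]
      exact congrArg _ (by exact h)
    subst hc
    simp only [Sigma.mk.inj_iff, heq_eq_eq, true_and]
    exact Subtype.ext (rhoShift_injective φ ψ (σ c) h)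
  · -- surjectivity
    intro q
    induction q using Quotient.ind with | _ α =>
    set c := Quotient.mk (dtc (QuotientGroup.map Γ₁ Γ₂ φ fun x hx => hφ x hx)
      (QuotientGroup.map Γ₁ Γ₂ ψ fun x hx => hψ x hx))
      (QuotientGroup.mk α : G₂ ⧸ Γ₂) with hc
    have hrel : (dtc (QuotientGroup.map Γ₁ Γ₂ φ fun x hx => hφ x hx)
        (QuotientGroup.map Γ₁ Γ₂ ψ fun x hx => hψ x hx)).r
        (QuotientGroup.mk (σ c) : G₂ ⧸ Γ₂) (QuotientGroup.mk α) :=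
      Quotient.exact ((hσ c).trans hc)
    obtain ⟨γb, hγb⟩ := hrel
    obtain ⟨γ, hγ⟩ := QuotientGroup.mk_surjective (γb⁻¹)
    have hmk : (QuotientGroup.mk ((ψ γ)⁻¹ * σ c * φ γ) : G₂ ⧸ Γ₂) = QuotientGroup.mk α := by
      have h1 : (QuotientGroup.mk α : G₂ ⧸ Γ₂) =
          QuotientGroup.map Γ₁ Γ₂ ψ (fun x hx => hψ x hx) γb * QuotientGroup.mk (σ c) *
            (QuotientGroup.map Γ₁ Γ₂ φ (fun x hx => hφ x hx) γb)⁻¹ := by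
        rw [hγb]; group
      rw [h1, ← inv_inv γb, ← hγ]
      simp only [QuotientGroup.mk_mul, QuotientGroup.mk_inv, map_inv, QuotientGroup.map_mk]
      group
      rfl
    have hδ : ((ψ γ)⁻¹ * σ c * φ γ)⁻¹ * α ∈ Γ₂ := (QuotientGroup.eq).mp hmk
    set δ := ((ψ γ)⁻¹ * σ c * φ γ)⁻¹ * α with hδdef
    set γ₂ := σ c * φ γ * δ * (φ γ)⁻¹ * (σ c)⁻¹ with hγ₂def
    have h1 : φ γ * δ * (φ γ)⁻¹ ∈ Γ₂ := (inferInstance : Γ₂.Normal).conj_mem _ hδ (φ γ)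
    have h2 : σ c * (φ γ * δ * (φ γ)⁻¹) * (σ c)⁻¹ ∈ Γ₂ :=
      (inferInstance : Γ₂.Normal).conj_mem _ h1 (σ c)
    have hγ₂mem : γ₂ ∈ Γ₂ := by simpa [hγ₂def, mul_assoc] using h2
    refine ⟨⟨c, ⟨Quotient.mk (dtc (conjComp (σ c) φ) ψ) γ₂, ⟨⟨γ₂, hγ₂mem⟩, rfl⟩⟩⟩, ?_⟩
    show rhoShift φ ψ (σ c) (Quotient.mk (dtc (conjComp (σ c) φ) ψ) γ₂) = _
    rw [rhoShift_mk]
    refine Quotient.sound ((dtc φ ψ).iseqv.symm ⟨γ, ?_⟩)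
    rw [hγ₂def, hδdef]
    group
end

section
/- Fiber size formula for the induced map on Reidemeister sets: in the covering setup with finite quotients, for β ∈ Π₂ and γ ∈ Γ₂ with [γ] ∈ im(î₂^β) ⊆ R[τ_β φ, ψ], the number of classes in R[τ_β φ', ψ'] mapping to [γ] under î₂^β equals the index [coin(τ_{β̄} φ̄, ψ̄) : u₁(coin(τ_{γβ} φ, ψ))], where u₁ : Π₁ → Π₁/Γ₁ is the projection. -/
/-- The coincidence subgroup `coin(φ,ψ) = {x : φ x = ψ x}`. -/
def coin {G₁ G₂ : Type*} [Group G₁] [Group G₂] (φ ψ : G₁ →* G₂) : Subgroup G₁ where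
  carrier := {x : G₁ | φ x = ψ x}
  one_mem' := by simp
  mul_mem' := by intro a b ha hb; simp_all [Set.mem_setOf_eq]
  inv_mem' := by intro a ha; simp_all [Set.mem_setOf_eq]

theorem conjComp_apply {G₁ G₂ : Type*} [Group G₁] [Group G₂] (β : G₂) (φ : G₁ →* G₂) (x : G₁) :
    conjComp β φ x = β * φ x * β⁻¹ := rfl

theorem mem_coin {G₁ G₂ : Type*} [Group G₁] [Group G₂] {φ ψ : G₁ →* G₂} {x : G₁} :
    x ∈ coin φ ψ ↔ φ x = ψ x := Iff.rfl

theorem keyIff {G : Type*} [Group G] (p q u v g β : G) :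
    (p⁻¹ * g * (β * u * β⁻¹) = q⁻¹ * g * (β * v * β⁻¹)) ↔
      (p * q⁻¹ = (g * β) * (u * v⁻¹) * (g * β)⁻¹) := by
  constructor
  · intro h
    have h2 := congrArg (fun t => p * t * (β * v * β⁻¹)⁻¹ * g⁻¹) h
    group at h2 ⊢
    exact h2.symm
  · intro h
    have h2 := congrArg (fun t => p⁻¹ * t * g * β * v * β⁻¹) h
    group at h2 ⊢
    exact h2.symm

/-- Fiber size formula (Kim–Lee, Lemma 2.1): the number of classes of
`R[τ_β φ', ψ']` mapping under `î₂^β` to the class of `γ ∈ Γ₂` equals the index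
`[coin(τ_β̄ φ̄, ψ̄) : u₁(coin(τ_{γβ} φ, ψ))]`. -/
theorem fiber_size_formula {G₁ G₂ : Type*} [Group G₁] [Group G₂]
    (Γ₁ : Subgroup G₁) (Γ₂ : Subgroup G₂) [Γ₁.Normal] [Γ₂.Normal]
    [Γ₁.FiniteIndex] [Γ₂.FiniteIndex]
    (φ ψ : G₁ →* G₂) (hφ : ∀ x ∈ Γ₁, φ x ∈ Γ₂) (hψ : ∀ x ∈ Γ₁, ψ x ∈ Γ₂)
    (hφβ : ∀ (β : G₂), ∀ x ∈ Γ₁, conjComp β φ x ∈ Γ₂)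
    (β : G₂) (γ : Γ₂) :
    Nat.card {c : ReidemeisterSet (restrictHom (conjComp β φ) (hφβ β)) (restrictHom ψ hψ) //
        ∃ γ' : Γ₂,
          Quotient.mk (dtc (restrictHom (conjComp β φ) (hφβ β)) (restrictHom ψ hψ)) γ' = c ∧
          Quotient.mk (dtc (conjComp β φ) ψ) ((γ' : G₂)) =
            Quotient.mk (dtc (conjComp β φ) ψ) ((γ : G₂))} =
    (Subgroup.map (QuotientGroup.mk' Γ₁) (coin (conjComp ((γ : G₂) * β) φ) ψ)).relIndex
      (coin (conjComp ((β : G₂ ⧸ Γ₂)) (QuotientGroup.map Γ₁ Γ₂ φ (fun x hx => hφ x hx)))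
            (QuotientGroup.map Γ₁ Γ₂ ψ (fun x hx => hψ x hx))) := by
  classical
  set K : Subgroup (G₁ ⧸ Γ₁) :=
    Subgroup.map (QuotientGroup.mk' Γ₁) (coin (conjComp ((γ : G₂) * β) φ) ψ) with hK
  set H : Subgroup (G₁ ⧸ Γ₁) :=
    coin (conjComp ((β : G₂ ⧸ Γ₂)) (QuotientGroup.map Γ₁ Γ₂ φ (fun x hx => hφ x hx)))
      (QuotientGroup.map Γ₁ Γ₂ ψ (fun x hx => hψ x hx)) with hH
  show Nat.card _ = Nat.card (↥H ⧸ K.subgroupOf H)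
  -- the membership condition for `H` in terms of representatives
  have hcond_iff : ∀ x : G₁, ((QuotientGroup.mk x : G₁ ⧸ Γ₁) ∈ H) ↔
      (ψ x)⁻¹ * (γ : G₂) * conjComp β φ x ∈ Γ₂ := by
    intro x
    rw [hH, mem_coin, conjComp_apply]
    show (β : G₂ ⧸ Γ₂) * (QuotientGroup.mk (φ x)) * (β : G₂ ⧸ Γ₂)⁻¹ = QuotientGroup.mk (ψ x) ↔ _
    have : ((β : G₂ ⧸ Γ₂) * (QuotientGroup.mk (φ x)) * (β : G₂ ⧸ Γ₂)⁻¹ : G₂ ⧸ Γ₂)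
        = QuotientGroup.mk (β * φ x * β⁻¹) := by
      simp
    rw [this, QuotientGroup.eq, conjComp_apply]
    constructor
    · intro hs
      have h1 := mul_mem (Subgroup.Normal.conj_mem ‹Γ₂.Normal› _ γ.2 (ψ x)⁻¹) (inv_mem hs)
      convert h1 using 1
      group
    · intro hs
      rw [← inv_mem_iff]
      have h1 := mul_mem (Subgroup.Normal.conj_mem ‹Γ₂.Normal› _ (inv_mem γ.2) (ψ x)⁻¹) hs
      convert h1 using 1
      group
  -- the representative elements of Γ₂
  let gam : ∀ x : G₁, ((ψ x)⁻¹ * (γ : G₂) * conjComp β φ x ∈ Γ₂) → Γ₂ :=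
    fun x hx => ⟨(ψ x)⁻¹ * (γ : G₂) * conjComp β φ x, hx⟩
  -- the key relation: two representatives give the same restricted class iff
  -- their difference lies in `K`
  have hR : ∀ (x z : G₁) (hx : (ψ x)⁻¹ * (γ : G₂) * conjComp β φ x ∈ Γ₂)
      (hz : (ψ z)⁻¹ * (γ : G₂) * conjComp β φ z ∈ Γ₂),
      (Quotient.mk (dtc (restrictHom (conjComp β φ) (hφβ β)) (restrictHom ψ hψ)) (gam x hx) =
        Quotient.mk (dtc (restrictHom (conjComp β φ) (hφβ β)) (restrictHom ψ hψ)) (gam z hz)) ↔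
      (QuotientGroup.mk x * (QuotientGroup.mk z)⁻¹ : G₁ ⧸ Γ₁) ∈ K := by
    intro x z hx hz
    constructor
    · intro h
      obtain ⟨c, hc⟩ := Quotient.exact h
      have hval : (ψ x)⁻¹ * (γ : G₂) * (β * φ x * β⁻¹) =
          (ψ (c : G₁))⁻¹ * ((ψ z)⁻¹ * (γ : G₂) * (β * φ z * β⁻¹)) * (β * φ (c : G₁) * β⁻¹) :=
        congrArg Subtype.val hc
      have E : (ψ x)⁻¹ * (γ : G₂) * (β * φ x * β⁻¹) =
          (ψ (z * (c : G₁)))⁻¹ * (γ : G₂) * (β * φ (z * (c : G₁)) * β⁻¹) := by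
        rw [hval]; simp only [map_mul]; group
      have hw := (keyIff (ψ x) (ψ (z * (c : G₁))) (φ x) (φ (z * (c : G₁))) (γ : G₂) β).mp E
      refine ⟨x * (z * (c : G₁))⁻¹, ?_, ?_⟩
      · show conjComp ((γ : G₂) * β) φ (x * (z * (c : G₁))⁻¹) = ψ (x * (z * (c : G₁))⁻¹)
        rw [conjComp_apply, map_mul ψ, map_inv ψ, map_mul φ, map_inv φ]
        exact hw.symm
      · show QuotientGroup.mk' Γ₁ (x * (z * (c : G₁))⁻¹) = _
        rw [map_mul, map_inv, map_mul]
        have h1 : QuotientGroup.mk' Γ₁ (c : G₁) = 1 := (QuotientGroup.eq_one_iff _).mpr c.2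
        rw [h1, mul_one]
        rfl
    · intro hKmem
      obtain ⟨w, hwC, hwmk⟩ := hKmem
      have hmk2 : (QuotientGroup.mk w : G₁ ⧸ Γ₁) = QuotientGroup.mk (x * z⁻¹) := by
        have : (QuotientGroup.mk (x * z⁻¹) : G₁ ⧸ Γ₁)
            = QuotientGroup.mk x * (QuotientGroup.mk z)⁻¹ := by simp
        rw [this]; exact hwmk
      have hmem : w⁻¹ * (x * z⁻¹) ∈ Γ₁ := QuotientGroup.eq.mp hmk2
      have hcmem : z⁻¹ * (w⁻¹ * (x * z⁻¹)) * (z⁻¹)⁻¹ ∈ Γ₁ :=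
        Subgroup.Normal.conj_mem ‹Γ₁.Normal› _ hmem z⁻¹
      set c : G₁ := z⁻¹ * (w⁻¹ * (x * z⁻¹)) * (z⁻¹)⁻¹ with hcdef
      refine Quotient.sound ⟨⟨c, hcmem⟩, Subtype.ext ?_⟩
      show (ψ x)⁻¹ * (γ : G₂) * (β * φ x * β⁻¹) =
          (ψ c)⁻¹ * ((ψ z)⁻¹ * (γ : G₂) * (β * φ z * β⁻¹)) * (β * φ c * β⁻¹)
      have E2 : (ψ c)⁻¹ * ((ψ z)⁻¹ * (γ : G₂) * (β * φ z * β⁻¹)) * (β * φ c * β⁻¹) =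
          (ψ (z * c))⁻¹ * (γ : G₂) * (β * φ (z * c) * β⁻¹) := by
        simp only [map_mul]; group
      rw [E2]
      refine (keyIff (ψ x) (ψ (z * c)) (φ x) (φ (z * c)) (γ : G₂) β).mpr ?_
      have hxw : x * (z * c)⁻¹ = w := by rw [hcdef]; group
      have hwC' : (γ : G₂) * β * φ w * ((γ : G₂) * β)⁻¹ = ψ w := hwC
      rw [← map_inv ψ, ← map_mul ψ, ← map_inv φ, ← map_mul φ, hxw]
      exact hwC'.symm
  -- the map from `H` to the fiber
  have Fco : ∀ h : H, (ψ (((h : G₁ ⧸ Γ₁)⁻¹).out))⁻¹ * (γ : G₂) *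
      conjComp β φ (((h : G₁ ⧸ Γ₁)⁻¹).out) ∈ Γ₂ := by
    intro h
    refine (hcond_iff _).mp ?_
    rw [QuotientGroup.out_eq']
    exact inv_mem h.2
  let F : H → {c : ReidemeisterSet (restrictHom (conjComp β φ) (hφβ β)) (restrictHom ψ hψ) //
        ∃ γ' : Γ₂,
          Quotient.mk (dtc (restrictHom (conjComp β φ) (hφβ β)) (restrictHom ψ hψ)) γ' = c ∧
          Quotient.mk (dtc (conjComp β φ) ψ) ((γ' : G₂)) =
            Quotient.mk (dtc (conjComp β φ) ψ) ((γ : G₂))} :=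
    fun h => ⟨Quotient.mk _ (gam _ (Fco h)), gam _ (Fco h), rfl,
      Quotient.sound ⟨((h : G₁ ⧸ Γ₁)⁻¹).out, rfl⟩⟩
  -- descend to the quotient
  have wd : ∀ a b : H, (QuotientGroup.leftRel (K.subgroupOf H)) a b → F a = F b := by
    intro a b hab
    rw [QuotientGroup.leftRel_apply] at hab
    apply Subtype.ext
    show Quotient.mk _ (gam _ (Fco a)) = Quotient.mk _ (gam _ (Fco b))
    refine (hR _ _ _ _).mpr ?_
    rw [QuotientGroup.out_eq', QuotientGroup.out_eq']
    have : ((a : G₁ ⧸ Γ₁))⁻¹ * ((b : G₁ ⧸ Γ₁)⁻¹)⁻¹ = ((a⁻¹ * b : H) : G₁ ⧸ Γ₁) := by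
      push_cast; group
    rw [this]
    exact (Subgroup.mem_subgroupOf.mp hab)
  let Flift := Quotient.lift F wd
  have hinj : Function.Injective Flift := by
    intro qa qb
    induction qa using Quotient.inductionOn with
    | h a =>
    induction qb using Quotient.inductionOn with
    | h b =>
    intro hfab
    have h1 : Quotient.mk _ (gam _ (Fco a)) = Quotient.mk _ (gam _ (Fco b)) :=
      congrArg Subtype.val hfab
    have h2 := (hR _ _ _ _).mp h1
    rw [QuotientGroup.out_eq', QuotientGroup.out_eq'] at h2
    apply Quotient.sound
    refine QuotientGroup.leftRel_apply.mpr ?_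
    rw [Subgroup.mem_subgroupOf]
    have : ((a⁻¹ * b : H) : G₁ ⧸ Γ₁) = ((a : G₁ ⧸ Γ₁))⁻¹ * ((b : G₁ ⧸ Γ₁)⁻¹)⁻¹ := by
      push_cast; group
    rw [this]
    exact h2
  have hsurj : Function.Surjective Flift := by
    rintro ⟨cl, γ', hmk, hcl⟩
    obtain ⟨x, hx⟩ := Quotient.exact hcl
    have hcx : (ψ x)⁻¹ * (γ : G₂) * conjComp β φ x ∈ Γ₂ := by
      rw [← hx]; exact γ'.2
    have hxH : (QuotientGroup.mk x : G₁ ⧸ Γ₁) ∈ H := (hcond_iff x).mpr hcx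
    refine ⟨Quotient.mk _ (⟨(QuotientGroup.mk x)⁻¹, inv_mem hxH⟩ : H), ?_⟩
    apply Subtype.ext
    show Quotient.mk _ (gam _ (Fco _)) = cl
    have step1 : Quotient.mk (dtc (restrictHom (conjComp β φ) (hφβ β)) (restrictHom ψ hψ))
        (gam _ (Fco ⟨(QuotientGroup.mk x)⁻¹, inv_mem hxH⟩)) =
        Quotient.mk (dtc (restrictHom (conjComp β φ) (hφβ β)) (restrictHom ψ hψ))
        (gam x hcx) := by
      refine (hR _ _ _ _).mpr ?_
      have houts : ((((⟨(QuotientGroup.mk x)⁻¹, inv_mem hxH⟩ : H) : G₁ ⧸ Γ₁))⁻¹).out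
          = ((QuotientGroup.mk x : G₁ ⧸ Γ₁)⁻¹⁻¹).out := rfl
      rw [houts]
      rw [QuotientGroup.out_eq']
      simp [one_mem]
    rw [step1]
    have : gam x hcx = γ' := Subtype.ext hx.symm
    rw [this]
    exact hmk
  exact (Nat.card_congr (Equiv.ofBijective Flift ⟨hinj, hsurj⟩)).symm
end
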